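/- Let R be a von Neumann algebra with trivial subalgebra ℂI and A ∈ R selfadjoint with spectral family E^A. Let m_A = inf{ λ | E^A_λ ≠ 0 } and M_A = min{ λ | E^A_λ = I }. Then σ_{ℂI} A = m_A · I and ρ_{ℂI} A = M_A · I; in particular m_A I ≤ A ≤ M_A I. -/
import Mathlib


/-- A bounded spectral family in a complete lattice `L` of projections. -/
structure SpectralFamily (L : Type*) [CompleteLattice L] where
  E : ℝ → L
  mono : Monotone E
  rightCont : ∀ l : ℝ, E l = ⨅ m : Set.Ioi l, E m.1
  eq_bot : ∃ l : ℝ, E l = ⊥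
  eq_top : ∃ l : ℝ, E l = ⊤

/-- The spectral order: `A ≤_s B` iff `E^B_λ ≤ E^A_λ` for all `λ`. -/
instance {L : Type*} [CompleteLattice L] : Preorder (SpectralFamily L) where
  le A B := ∀ l : ℝ, B.E l ≤ A.E l
  le_refl A l := le_rfl
  le_trans A B C hab hbc l := le_trans (hbc l) (hab l)

/-- The step spectral family: `⊥` below `c`, `⊤` from `c` on. -/
noncomputable def stepFam (L : Type*) [CompleteLattice L] (c : ℝ) : SpectralFamily L where
  E l := if l < c then ⊥ else ⊤
  mono := by
    intro a b hab
    dsimp only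
    split_ifs with h1 h2 h2
    · exact le_rfl
    · exact bot_le
    · exact absurd (lt_of_le_of_lt hab h2) h1
    · exact le_rfl
  rightCont l := by
    show (if l < c then (⊥ : L) else ⊤) = ⨅ m : Set.Ioi l, if m.1 < c then (⊥ : L) else ⊤
    by_cases h : l < c
    · rw [if_pos h]
      refine le_antisymm bot_le ?_
      have hmem : (l + c) / 2 ∈ Set.Ioi l := by simp [Set.mem_Ioi]; linarith
      refine le_trans (iInf_le _ ⟨(l + c) / 2, hmem⟩) ?_
      rw [if_pos (by linarith : (l + c) / 2 < c)]
    · rw [if_neg h]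
      refine le_antisymm (le_iInf fun m => ?_) le_top
      rw [if_neg (by push_neg at h ⊢; exact h.trans m.2.le)]
  eq_bot := ⟨c - 1, if_pos (by linarith)⟩
  eq_top := ⟨c, if_neg (lt_irrefl c)⟩

theorem trivial_restrictions {L : Type*} [CompleteLattice L]
    (A ρA σA : SpectralFamily L) (M : Set L) (hM : M = {x : L | x = ⊥ ∨ x = ⊤})
    (hρ : IsGLB {C : SpectralFamily L | (∀ l : ℝ, C.E l ∈ M) ∧ A ≤ C} ρA)
    (hσ : IsLUB {B : SpectralFamily L | (∀ l : ℝ, B.E l ∈ M) ∧ B ≤ A} σA) :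
    (∀ l : ℝ, σA.E l = if l < sInf {l : ℝ | A.E l ≠ ⊥} then ⊥ else ⊤) ∧
    (∀ l : ℝ, ρA.E l = if l < sInf {l : ℝ | A.E l = ⊤} then ⊥ else ⊤) ∧
    (∀ l : ℝ, A.E l ≤ (if l < sInf {l : ℝ | A.E l ≠ ⊥} then (⊥ : L) else ⊤)) ∧
    (∀ l : ℝ, (if l < sInf {l : ℝ | A.E l = ⊤} then (⊥ : L) else ⊤) ≤ A.E l) := by
  by_cases hnt : (⊥ : L) = ⊤
  · -- degenerate lattice: all elements are equal
    have hall : ∀ x y : L, x = y := fun x y =>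
      le_antisymm (le_top.trans (hnt ▸ bot_le)) (le_top.trans (hnt ▸ bot_le))
    exact ⟨fun l => hall _ _, fun l => hall _ _,
      fun l => (hall _ _ : A.E l = _).le, fun l => (hall _ _ : _ = A.E l).le⟩
  obtain ⟨l0, hl0⟩ := A.eq_bot
  obtain ⟨l1, hl1⟩ := A.eq_top
  set S1 : Set ℝ := {l : ℝ | A.E l ≠ ⊥} with hS1
  set S2 : Set ℝ := {l : ℝ | A.E l = ⊤} with hS2
  have hbdd1 : BddBelow S1 := ⟨l0, fun l hl => by
    by_contra h
    push_neg at h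
    exact hl (le_antisymm (hl0 ▸ A.mono h.le) bot_le)⟩
  have hne1 : S1.Nonempty := ⟨l1, by simp only [hS1, Set.mem_setOf_eq, hl1]; exact fun h => hnt h.symm⟩
  have hbdd2 : BddBelow S2 := ⟨l0, fun l hl => by
    by_contra h
    push_neg at h
    have := A.mono h.le
    rw [hl0, hl] at this
    exact hnt (le_antisymm bot_le this)⟩
  have hne2 : S2.Nonempty := ⟨l1, hl1⟩
  set m1 := sInf S1
  set m2 := sInf S2
  -- facts about m1
  have hlow1 : ∀ l, l < m1 → A.E l = ⊥ := fun l h => by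
    by_contra hc
    exact absurd (csInf_le hbdd1 hc) (not_le.mpr h)
  have hgt1 : ∀ l, m1 < l → ∃ l' ∈ S1, l' < l := fun l h =>
    (csInf_lt_iff hbdd1 hne1).mp h
  -- facts about m2
  have htop2 : ∀ l, m2 < l → A.E l = ⊤ := fun l h => by
    obtain ⟨l', hl', hl'l⟩ := (csInf_lt_iff hbdd2 hne2).mp h
    exact le_antisymm le_top (hl' ▸ A.mono hl'l.le)
  have htop2' : A.E m2 = ⊤ := by
    rw [A.rightCont m2]
    exact le_antisymm le_top (le_iInf fun m => (htop2 m.1 m.2).ge)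
  -- the two step families
  have hmemσ : stepFam L m1 ∈ {B : SpectralFamily L | (∀ l : ℝ, B.E l ∈ M) ∧ B ≤ A} := by
    constructor
    · intro l
      rw [hM]
      dsimp [stepFam]
      split_ifs <;> simp
    · intro l
      dsimp [stepFam]
      split_ifs with h
      · exact (hlow1 l h).le
      · exact le_top
  have hubσ : ∀ B ∈ {B : SpectralFamily L | (∀ l : ℝ, B.E l ∈ M) ∧ B ≤ A}, B ≤ stepFam L m1 := by
    rintro B ⟨hBM, hBA⟩ l
    dsimp [stepFam]
    split_ifs with h
    · exact bot_le
    · push_neg at h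
      -- need B.E l = ⊤
      have key : ∀ l', m1 < l' → B.E l' = ⊤ := by
        intro l' hl'
        obtain ⟨l'', hl'', hl''l⟩ := hgt1 l' hl'
        rcases (hM ▸ hBM l') with hb | hb
        · exact absurd (le_antisymm ((hBA l'').trans (hb ▸ B.mono hl''l.le)) bot_le) hl''
        · exact hb
      rcases lt_or_eq_of_le h with h' | h'
      · exact (key l h').ge
      · rw [← h', B.rightCont m1]
        exact le_iInf fun m => (key m.1 m.2).ge
  have hmemρ : stepFam L m2 ∈ {C : SpectralFamily L | (∀ l : ℝ, C.E l ∈ M) ∧ A ≤ C} := by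
    constructor
    · intro l
      rw [hM]
      dsimp [stepFam]
      split_ifs <;> simp
    · intro l
      dsimp [stepFam]
      split_ifs with h
      · exact bot_le
      · push_neg at h
        rcases lt_or_eq_of_le h with h' | h'
        · exact (htop2 l h').ge
        · exact (h' ▸ htop2').ge
  have hlbρ : ∀ C ∈ {C : SpectralFamily L | (∀ l : ℝ, C.E l ∈ M) ∧ A ≤ C}, stepFam L m2 ≤ C := by
    rintro C ⟨hCM, hAC⟩ l
    dsimp [stepFam]
    split_ifs with h
    · rcases (hM ▸ hCM l) with hc | hc
      · exact hc.le
      · exfalso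
        have : A.E l = ⊤ := le_antisymm le_top (hc ▸ hAC l)
        exact absurd (csInf_le hbdd2 this) (not_le.mpr h)
    · exact le_top
  have hσ1 : σA ≤ stepFam L m1 := hσ.2 hubσ
  have hσ2 : stepFam L m1 ≤ σA := hσ.1 hmemσ
  have hρ1 : ρA ≤ stepFam L m2 := hρ.1 hmemρ
  have hρ2 : stepFam L m2 ≤ ρA := hρ.2 hlbρ
  refine ⟨fun l => le_antisymm (hσ2 l) (hσ1 l), fun l => le_antisymm (hρ2 l) (hρ1 l),
    fun l => hmemσ.2 l, fun l => hmemρ.2 l⟩
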